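/- Weight ratio of the two-task EMGD solution: let g₁, g₂ be vectors in a real inner product space and σ₁, σ₂ > 0 with σ₂ g₁ ≠ σ₁ g₂. If σ₁⟨g₂, g₂⟩ > σ₂⟨g₁, g₂⟩ and σ₂⟨g₁, g₁⟩ > σ₁⟨g₁, g₂⟩, then the minimizer (λ₁*, λ₂*) of the two-task EMGD problem has λ₁* > 0, λ₂* > 0 and satisfies λ₁*/λ₂* = (σ₁⟨g₂, g₂⟩ − σ₂⟨g₁, g₂⟩)/(σ₂⟨g₁, g₁⟩ − σ₁⟨g₁, g₂⟩). -/

import Mathlib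

open RealInnerProductSpace

/-- weight ratio of the two-task EMGD solution: if `σ₂ • g₁ ≠ σ₁ • g₂`,
`σ₁⟪g₂, g₂⟫ > σ₂⟪g₁, g₂⟫` and `σ₂⟪g₁, g₁⟫ > σ₁⟪g₁, g₂⟫`, then any minimizer
`(λ₁*, λ₂*)` of the two-task EMGD problem has `λ₁* > 0`, `λ₂* > 0` and
`λ₁*/λ₂* = (σ₁⟪g₂, g₂⟫ - σ₂⟪g₁, g₂⟫)/(σ₂⟪g₁, g₁⟫ - σ₁⟪g₁, g₂⟫)`. -/
theorem stmt_14 {H : Type*} [NormedAddCommGroup H] [InnerProductSpace ℝ H]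
    (g₁ g₂ : H) (σ₁ σ₂ : ℝ) (hσ₁ : 0 < σ₁) (hσ₂ : 0 < σ₂)
    (hne : σ₂ • g₁ ≠ σ₁ • g₂)
    (h₁ : σ₂ * ⟪g₁, g₂⟫ < σ₁ * ⟪g₂, g₂⟫)
    (h₂ : σ₁ * ⟪g₁, g₂⟫ < σ₂ * ⟪g₁, g₁⟫)
    (lam₁star lam₂star : ℝ)
    (hnn₁ : 0 ≤ lam₁star) (hnn₂ : 0 ≤ lam₂star)
    (hfeas : lam₁star * σ₁ + lam₂star * σ₂ = 1)
    (hmin : ∀ lam₁ lam₂ : ℝ, 0 ≤ lam₁ → 0 ≤ lam₂ → lam₁ * σ₁ + lam₂ * σ₂ = 1 →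
      ‖lam₁star • g₁ + lam₂star • g₂‖ ^ 2 ≤ ‖lam₁ • g₁ + lam₂ • g₂‖ ^ 2) :
    0 < lam₁star ∧ 0 < lam₂star ∧
    lam₁star / lam₂star =
      (σ₁ * ⟪g₂, g₂⟫ - σ₂ * ⟪g₁, g₂⟫) / (σ₂ * ⟪g₁, g₁⟫ - σ₁ * ⟪g₁, g₂⟫) := by
  set p : ℝ := ⟪g₁, g₁⟫ with hpdef
  set q : ℝ := ⟪g₁, g₂⟫ with hqdef
  set r : ℝ := ⟪g₂, g₂⟫ with hrdef
  have hA : 0 < σ₁ * r - σ₂ * q := by linarith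
  have hB : 0 < σ₂ * p - σ₁ * q := by linarith
  set A : ℝ := σ₁ * r - σ₂ * q with hAdef
  set B : ℝ := σ₂ * p - σ₁ * q with hBdef
  set D : ℝ := σ₂ ^ 2 * p - 2 * σ₁ * σ₂ * q + σ₁ ^ 2 * r with hDdef
  have hD : 0 < D := by
    have hvne : σ₂ • g₁ - σ₁ • g₂ ≠ 0 := sub_ne_zero.mpr hne
    have hpos : (0:ℝ) < ‖σ₂ • g₁ - σ₁ • g₂‖ ^ 2 :=
      pow_pos (norm_pos_iff.mpr hvne) 2
    have hcalc : ‖σ₂ • g₁ - σ₁ • g₂‖ ^ 2 = D := by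
      rw [← real_inner_self_eq_norm_sq]
      simp only [inner_sub_sub_self, real_inner_smul_left, real_inner_smul_right,
        real_inner_comm g₂ g₁, hDdef, hpdef, hqdef, hrdef]
      ring
    linarith [hcalc ▸ hpos]
  have key : ∀ a b : ℝ, ‖a • g₁ + b • g₂‖ ^ 2 = a ^ 2 * p + 2 * a * b * q + b ^ 2 * r := by
    intro a b
    rw [← real_inner_self_eq_norm_sq]
    simp only [real_inner_add_add_self, real_inner_smul_left, real_inner_smul_right,
      hpdef, hqdef, hrdef]
    ring
  clear_value p q r A B D
  have hSum : A * σ₁ + B * σ₂ = D := by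
    rw [hAdef, hBdef, hDdef]; ring
  have hfeasμ : (A / D) * σ₁ + (B / D) * σ₂ = 1 := by
    rw [div_mul_eq_mul_div, div_mul_eq_mul_div, ← add_div, hSum,
      div_self hD.ne']
  have hle := hmin (A / D) (B / D) (div_pos hA hD).le (div_pos hB hD).le hfeasμ
  rw [key, key] at hle
  have hD2 : (0:ℝ) < D ^ 2 := by positivity
  have hM : (A / D) ^ 2 * p + 2 * (A / D) * (B / D) * q + (B / D) ^ 2 * r
      = (A ^ 2 * p + 2 * A * B * q + B ^ 2 * r) / D ^ 2 := by
    field_simp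
  rw [hM, le_div_iff₀ hD2] at hle
  have hid : D * (D * lam₁star - A) ^ 2 =
      σ₂ ^ 2 * ((lam₁star ^ 2 * p + 2 * lam₁star * lam₂star * q + lam₂star ^ 2 * r) * D ^ 2)
      - σ₂ ^ 2 * (A ^ 2 * p + 2 * A * B * q + B ^ 2 * r) := by
    rw [hAdef, hBdef, hDdef]
    linear_combination ((-1*r^3*σ₁^4) + (4*q*r^2*σ₁^3*σ₂) + (-4*q^2*r*σ₁^2*σ₂^2)
      + (-2*p*r^2*σ₁^2*σ₂^2) + (4*p*q*r*σ₁*σ₂^3) + (-1*p^2*r*σ₂^4)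
      + (-1*lam₂star*r^3*σ₁^4*σ₂) + (4*lam₂star*q*r^2*σ₁^3*σ₂^2)
      + (-4*lam₂star*q^2*r*σ₁^2*σ₂^3) + (-2*lam₂star*p*r^2*σ₁^2*σ₂^3)
      + (4*lam₂star*p*q*r*σ₁*σ₂^4) + (-1*lam₂star*p^2*r*σ₂^5)
      + (1*lam₁star*r^3*σ₁^5) + (-6*lam₁star*q*r^2*σ₁^4*σ₂)
      + (12*lam₁star*q^2*r*σ₁^3*σ₂^2) + (-8*lam₁star*q^3*σ₁^2*σ₂^3)
      + (2*lam₁star*p*r^2*σ₁^3*σ₂^2) + (-8*lam₁star*p*q*r*σ₁^2*σ₂^3)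
      + (8*lam₁star*p*q^2*σ₁*σ₂^4) + (1*lam₁star*p^2*r*σ₁*σ₂^4)
      + (-2*lam₁star*p^2*q*σ₂^5)) * hfeas
  have hsq : D * (D * lam₁star - A) ^ 2 ≤ 0 := by
    rw [hid]
    have := mul_le_mul_of_nonneg_left hle (sq_nonneg σ₂)
    linarith
  have hDa : D * lam₁star = A := by
    have h0 : (D * lam₁star - A) ^ 2 ≤ 0 := by
      nlinarith [sq_nonneg (D * lam₁star - A), hD]
    have := pow_eq_zero_iff (n := 2) (by norm_num) |>.mp
      (le_antisymm h0 (sq_nonneg _))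
    linarith
  have hl1 : lam₁star = A / D := by
    rw [eq_div_iff hD.ne']
    linarith [hDa]
  have hl2 : lam₂star = B / D := by
    rw [eq_div_iff hD.ne']
    have h3 : lam₂star * σ₂ * D = (1 - lam₁star * σ₁) * D := by
      have : lam₂star * σ₂ = 1 - lam₁star * σ₁ := by linarith
      rw [this]
    have h5 : lam₁star * σ₁ * D = σ₁ * A := by
      rw [← hDa]; ring
    have h4 : σ₂ * (lam₂star * D) = σ₂ * B := by
      linear_combination h3 - h5 - hSum
    exact mul_left_cancel₀ hσ₂.ne' h4
  refine ⟨?_, ?_, ?_⟩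
  · rw [hl1]; exact div_pos hA hD
  · rw [hl2]; exact div_pos hB hD
  · rw [hl1, hl2]
    rw [div_div_div_eq, mul_comm D B, mul_div_mul_right _ _ hD.ne']
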